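/- Fix $\beta > 1$ and define $I(x) = -(\beta-1)x\tau(x) - \ln(1-(\beta-1)\tau(x))$ where $\tau(x)$ solves $\int_1^\infty ((\beta-1)^{-1}y^\beta - \tau)^{-1}dy = x$. Then $I(x)/x \to 1/(\beta-1)$ as $x \to \infty$, and consequently $J(x) = xI(x^{\beta-1})$ satisfies $J(x)/x^\beta \to 1/(\beta-1)$ as $x \to \infty$. -/

import Mathlib

open MeasureTheory Filter Topology Set

lemma aux_pos (β : ℝ) (hβ : 1 < β) {h y : ℝ} (hh : 0 < h) (hy : 1 ≤ y) : 0 < y ^ β - 1 + h := by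
  have := Real.one_le_rpow hy (by linarith : (0:ℝ) ≤ β)
  linarith

lemma aux_pos' (β : ℝ) (hβ : 1 < β) {h y : ℝ} (hh : 0 ≤ h) (hy : 1 ≤ y) : 0 ≤ y ^ β - 1 + h := by
  have := Real.one_le_rpow hy (by linarith : (0:ℝ) ≤ β)
  linarith

lemma aux_bound (β : ℝ) (hβ : 1 < β) {h y : ℝ} (hh : 0 ≤ h) (hy : 2 ≤ y) :
    (y ^ β - 1 + h)⁻¹ ≤ (1 - (2:ℝ) ^ (-β))⁻¹ * y ^ (-β) := by
  have hy0 : (0:ℝ) < y := by linarith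
  have h2 : (2:ℝ) ^ (-β) < 1 := Real.rpow_lt_one_of_one_lt_of_neg one_lt_two (by linarith)
  have h2p : (0:ℝ) < (2:ℝ) ^ (-β) := Real.rpow_pos_of_pos two_pos _
  have hyb : (2:ℝ) ^ β ≤ y ^ β := Real.rpow_le_rpow (by norm_num) hy (by linarith)
  have h22 : (2:ℝ) ^ (-β) * (2:ℝ) ^ β = 1 := by
    rw [← Real.rpow_add two_pos]; simp
  have hybp : (0:ℝ) < y ^ β := Real.rpow_pos_of_pos hy0 _
  have key : (1 - (2:ℝ) ^ (-β)) * y ^ β ≤ y ^ β - 1 + h := by nlinarith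
  have hpos : (0:ℝ) < (1 - (2:ℝ) ^ (-β)) * y ^ β := by nlinarith
  calc (y ^ β - 1 + h)⁻¹ ≤ ((1 - (2:ℝ) ^ (-β)) * y ^ β)⁻¹ := by
        exact inv_anti₀ hpos key
    _ = (1 - (2:ℝ) ^ (-β))⁻¹ * y ^ (-β) := by
        rw [mul_inv, Real.rpow_neg hy0.le]

lemma aux_int_Ioi2 (β : ℝ) (hβ : 1 < β) {h : ℝ} (hh : 0 ≤ h) :
    IntegrableOn (fun y : ℝ => (y ^ β - 1 + h)⁻¹) (Ioi 2) := by
  have hint : IntegrableOn (fun y : ℝ => (1 - (2:ℝ) ^ (-β))⁻¹ * y ^ (-β)) (Ioi 2) :=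
    (integrableOn_Ioi_rpow_of_lt (by linarith : -β < -1) two_pos).const_mul _
  have hm : Measurable (fun y : ℝ => (y ^ β - 1 + h)⁻¹) :=
    ((((Real.continuous_rpow_const (by linarith : (0:ℝ) ≤ β)).measurable).sub measurable_const).add_const h).inv
  refine hint.mono' hm.aestronglyMeasurable ?_
  filter_upwards [ae_restrict_mem measurableSet_Ioi] with y hy
  have hy2 : (2:ℝ) ≤ y := le_of_lt hy
  have := aux_bound β hβ hh hy2
  rw [Real.norm_eq_abs, abs_of_nonneg (inv_nonneg.mpr (aux_pos' β hβ hh (by linarith)))]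
  exact this

lemma aux_cont (β : ℝ) (hβ : 1 < β) {h : ℝ} (hh : 0 < h) :
    Continuous (fun y : ℝ => y ^ β - 1 + h) :=
  ((Real.continuous_rpow_const (by linarith : (0:ℝ) ≤ β)).sub continuous_const).add
    continuous_const

lemma aux_int_Icc (β : ℝ) (hβ : 1 < β) {h : ℝ} (hh : 0 < h) (t : ℝ) :
    IntegrableOn (fun y : ℝ => (y ^ β - 1 + h)⁻¹) (Icc 1 t) := by
  refine ContinuousOn.integrableOn_Icc ?_
  refine ContinuousOn.inv₀ (aux_cont β hβ hh).continuousOn ?_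
  intro y hy
  exact ne_of_gt (aux_pos β hβ hh hy.1)

lemma aux_int_Ici (β : ℝ) (hβ : 1 < β) {h : ℝ} (hh : 0 < h) :
    IntegrableOn (fun y : ℝ => (y ^ β - 1 + h)⁻¹) (Ici 1) := by
  have : Ici (1:ℝ) = Icc 1 2 ∪ Ioi 2 := (Icc_union_Ioi_eq_Ici (by norm_num)).symm
  rw [this]
  exact (aux_int_Icc β hβ hh 2).union (aux_int_Ioi2 β hβ hh.le)

lemma aux_split (β : ℝ) (hβ : 1 < β) {h : ℝ} (hh : 0 < h) :
    (∫ y in Ici (1:ℝ), (y ^ β - 1 + h)⁻¹) =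
      (∫ y in Icc (1:ℝ) 2, (y ^ β - 1 + h)⁻¹) + ∫ y in Ioi (2:ℝ), (y ^ β - 1 + h)⁻¹ := by
  rw [← setIntegral_union ((Iic_disjoint_Ioi le_rfl).mono Icc_subset_Iic_self le_rfl) measurableSet_Ioi
      (aux_int_Icc β hβ hh 2) (aux_int_Ioi2 β hβ hh.le),
    Icc_union_Ioi_eq_Ici (by norm_num : (1:ℝ) ≤ 2)]

lemma aux_ftc {K h δ : ℝ} (hK : 0 < K) (hh : 0 < h) (hδ : 0 < δ) :
    (∫ y in Icc (1:ℝ) (1+δ), (K * (y - 1) + h)⁻¹) =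
      (Real.log (K * δ + h) - Real.log h) / K := by
  rw [integral_Icc_eq_integral_Ioc, ← intervalIntegral.integral_of_le (by linarith)]
  have hpos : ∀ y ∈ uIcc (1:ℝ) (1+δ), 0 < K * (y - 1) + h := by
    intro y hy
    rw [uIcc_of_le (by linarith)] at hy
    nlinarith [hy.1]
  have hder : ∀ y ∈ uIcc (1:ℝ) (1+δ),
      HasDerivAt (fun y => Real.log (K * (y - 1) + h) / K) ((K * (y - 1) + h)⁻¹) y := by
    intro y hy
    have h1 : HasDerivAt (fun y : ℝ => K * (y - 1) + h) K y := by
      simpa using (((hasDerivAt_id y).sub_const 1).const_mul K).add_const h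
    have h2 := (h1.log (ne_of_gt (hpos y hy))).div_const K
    have : K / (K * (y - 1) + h) / K = (K * (y - 1) + h)⁻¹ := by
      have := ne_of_gt (hpos y hy)
      field_simp
    rwa [this] at h2
  have hint : IntervalIntegrable (fun y : ℝ => (K * (y - 1) + h)⁻¹) volume 1 (1+δ) := by
    apply ContinuousOn.intervalIntegrable
    exact ContinuousOn.inv₀ (by fun_prop) (fun y hy => ne_of_gt (hpos y hy))
  rw [intervalIntegral.integral_eq_sub_of_hasDerivAt hder hint]
  have : K * (1 + δ - 1) + h = K * δ + h := by ring
  rw [this]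
  ring_nf

-- pointwise lower bound: y^β ≤ 1 + K (y-1) on [1, 1+δ]
lemma aux_pw_low (β : ℝ) (hβ : 1 < β) {δ y : ℝ} (hδ : 0 < δ)
    (hy : y ∈ Icc (1:ℝ) (1+δ)) :
    y ^ β ≤ 1 + β * (1+δ) ^ (β-1) * (y - 1) := by
  set K := β * (1+δ) ^ (β-1) with hKdef
  have hmono : MonotoneOn (fun y : ℝ => 1 + K * (y - 1) - y ^ β) (Icc 1 (1+δ)) := by
    apply monotoneOn_of_deriv_nonneg (convex_Icc _ _)
    · exact (by fun_prop : Continuous fun y : ℝ => 1 + K * (y-1)).continuousOn.sub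
        ((Real.continuous_rpow_const (by linarith : (0:ℝ) ≤ β)).continuousOn)
    · intro x hx
      rw [interior_Icc] at hx
      have hx0 : x ≠ 0 := by intro hc; rw [hc] at hx; linarith [hx.1]
      exact (((hasDerivAt_const x (1:ℝ)).add (((hasDerivAt_id x).sub_const 1).const_mul K)).sub
        (Real.hasDerivAt_rpow_const (p := β) (Or.inl hx0))).differentiableAt.differentiableWithinAt
    · intro x hx
      rw [interior_Icc] at hx
      have hx0 : x ≠ 0 := by intro hc; rw [hc] at hx; linarith [hx.1]
      have hd := ((hasDerivAt_const x (1:ℝ)).add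
        (((hasDerivAt_id x).sub_const 1).const_mul K)).sub
        (Real.hasDerivAt_rpow_const (p := β) (Or.inl hx0))
      have hd' : HasDerivAt (fun y : ℝ => 1 + K * (y - 1) - y ^ β) (0 + K * 1 - β * x ^ (β - 1)) x := hd
      rw [hd'.deriv]
      have h1 : x ^ (β-1) ≤ (1+δ) ^ (β-1) :=
        Real.rpow_le_rpow (by linarith [hx.1]) hx.2.le (by linarith)
      have hb : (0:ℝ) < β := by linarith
      simp only [hKdef]
      nlinarith
  have h0 : (0:ℝ) ≤ 1 + K * (y - 1) - y ^ β := by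
    have := hmono (left_mem_Icc.mpr (by linarith)) hy hy.1
    simpa [Real.one_rpow] using this
  linarith

-- upper estimate for G
lemma aux_upper (β : ℝ) (hβ : 1 < β) {h : ℝ} (hh : 0 < h) (hh1 : h ≤ 1) :
    (∫ y in Ici (1:ℝ), (y ^ β - 1 + h)⁻¹) ≤
      -Real.log h / β + ((Real.log (β + 1)) / β +
        ∫ y in Ioi (2:ℝ), (1 - (2:ℝ) ^ (-β))⁻¹ * y ^ (-β)) := by
  have hb : (0:ℝ) < β := by linarith
  rw [aux_split β hβ hh]
  have hIcc : (∫ y in Icc (1:ℝ) 2, (y ^ β - 1 + h)⁻¹) ≤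
      (Real.log (β + h) - Real.log h) / β := by
    have hftc := aux_ftc hb hh one_pos
    norm_num at hftc
    rw [← hftc]
    apply setIntegral_mono_on
    · exact aux_int_Icc β hβ hh 2
    · apply ContinuousOn.integrableOn_Icc
      refine ContinuousOn.inv₀ (by fun_prop) ?_
      intro y hy
      have : (0:ℝ) < β * (y - 1) + h := by nlinarith [hy.1]
      · exact ne_of_gt this
    · exact measurableSet_Icc
    · intro y hy
      have hbern : 1 + β * (y - 1) ≤ y ^ β := by
        simpa using one_add_mul_self_le_rpow_one_add
          (by linarith [hy.1] : (-1:ℝ) ≤ y - 1) hβ.le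
      have h1 : (0:ℝ) < β * (y - 1) + h := by nlinarith [hy.1]
      exact inv_anti₀ h1 (by linarith)
  have hIoi : (∫ y in Ioi (2:ℝ), (y ^ β - 1 + h)⁻¹) ≤
      ∫ y in Ioi (2:ℝ), (1 - (2:ℝ) ^ (-β))⁻¹ * y ^ (-β) := by
    apply setIntegral_mono_on
    · exact aux_int_Ioi2 β hβ hh.le
    · exact (integrableOn_Ioi_rpow_of_lt (by linarith : -β < -1) two_pos).const_mul _
    · exact measurableSet_Ioi
    · intro y hy
      exact aux_bound β hβ hh.le (le_of_lt hy)
  have hlog : Real.log (β + h) ≤ Real.log (β + 1) := by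
    apply Real.log_le_log (by nlinarith)
    linarith
  have : (Real.log (β + h) - Real.log h) / β ≤
      (Real.log (β + 1) - Real.log h) / β := by
    gcongr
  calc _ ≤ (Real.log (β + h) - Real.log h) / β +
        ∫ y in Ioi (2:ℝ), (1 - (2:ℝ) ^ (-β))⁻¹ * y ^ (-β) := by
        exact add_le_add hIcc hIoi
    _ ≤ _ := by
        have := this
        have heq : -Real.log h / β + ((Real.log (β + 1)) / β +
            ∫ y in Ioi (2:ℝ), (1 - (2:ℝ) ^ (-β))⁻¹ * y ^ (-β)) =
            (Real.log (β + 1) - Real.log h) / β +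
            ∫ y in Ioi (2:ℝ), (1 - (2:ℝ) ^ (-β))⁻¹ * y ^ (-β) := by ring
        rw [heq]
        linarith

-- lower estimate for G
lemma aux_lower (β : ℝ) (hβ : 1 < β) {δ h : ℝ} (hδ : 0 < δ) (hh : 0 < h) :
    (Real.log (β * (1+δ) ^ (β-1) * δ) - Real.log h) / (β * (1+δ) ^ (β-1)) ≤
      ∫ y in Ici (1:ℝ), (y ^ β - 1 + h)⁻¹ := by
  set K := β * (1+δ) ^ (β-1) with hKdef
  have hb : (0:ℝ) < β := by linarith
  have hK : (0:ℝ) < K := by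
    have : (0:ℝ) < (1+δ) ^ (β-1) := Real.rpow_pos_of_pos (by linarith) _
    positivity
  have step1 : (Real.log (K * δ) - Real.log h) / K ≤
      (Real.log (K * δ + h) - Real.log h) / K := by
    rw [div_le_div_iff_of_pos_right hK]
    have := Real.log_le_log (show (0:ℝ) < K * δ by positivity) (by linarith : K * δ ≤ K * δ + h)
    linarith
  have step2 : (Real.log (K * δ + h) - Real.log h) / K ≤
      ∫ y in Icc (1:ℝ) (1+δ), (y ^ β - 1 + h)⁻¹ := by
    rw [← aux_ftc hK hh hδ]
    apply setIntegral_mono_on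
    · apply ContinuousOn.integrableOn_Icc
      refine ContinuousOn.inv₀ (by fun_prop) ?_
      intro y hy
      have : (0:ℝ) < K * (y - 1) + h := by nlinarith [hy.1]
      exact ne_of_gt this
    · exact aux_int_Icc β hβ hh _
    · exact measurableSet_Icc
    · intro y hy
      have hpw := aux_pw_low β hβ hδ hy
      have h1 : (0:ℝ) < y ^ β - 1 + h := aux_pos β hβ hh hy.1
      exact inv_anti₀ h1 (by rw [hKdef]; linarith)
  have step3 : (∫ y in Icc (1:ℝ) (1+δ), (y ^ β - 1 + h)⁻¹) ≤
      ∫ y in Ici (1:ℝ), (y ^ β - 1 + h)⁻¹ := by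
    apply setIntegral_mono_set (aux_int_Ici β hβ hh)
    · filter_upwards [ae_restrict_mem measurableSet_Ici] with y hy
      exact le_of_lt (inv_pos.mpr (aux_pos β hβ hh hy))
    · exact HasSubset.Subset.eventuallyLE (Icc_subset_Ici_self)
  linarith

-- monotonicity in h for large h
lemma aux_mono (β : ℝ) (hβ : 1 < β) {h : ℝ} (hh : 1 ≤ h) :
    (∫ y in Ici (1:ℝ), (y ^ β - 1 + h)⁻¹) ≤ ∫ y in Ici (1:ℝ), (y ^ β - 1 + 1)⁻¹ := by
  apply setIntegral_mono_on (aux_int_Ici β hβ (by linarith)) (aux_int_Ici β hβ one_pos)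
    measurableSet_Ici
  intro y hy
  exact inv_anti₀ (aux_pos β hβ one_pos hy) (by linarith)

set_option maxHeartbeats 2000000 in
theorem rate_function_asymptotics_at_infinity (β : ℝ) (hβ : 1 < β)
    (τ : ℝ → ℝ) (hτlt : ∀ x > 0, τ x < (β - 1)⁻¹)
    (hτ : ∀ x > 0, (∫ y in Set.Ici (1 : ℝ), ((β - 1)⁻¹ * y ^ β - τ x)⁻¹) = x)
    (I : ℝ → ℝ)
    (hI : ∀ x, I x = -((β - 1) * x * τ x) - Real.log (1 - (β - 1) * τ x)) :
    Tendsto (fun x => I x / x) atTop (𝓝 ((β - 1)⁻¹)) ∧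
    Tendsto (fun x => x * I (x ^ (β - 1)) / x ^ β) atTop (𝓝 ((β - 1)⁻¹)) := by
  have hb : (0:ℝ) < β - 1 := by linarith
  set G : ℝ → ℝ := fun h => ∫ y in Ici (1:ℝ), (y ^ β - 1 + h)⁻¹ with hGdef
  set hf : ℝ → ℝ := fun x => 1 - (β - 1) * τ x with hfdef
  clear_value G hf
  -- positivity of hf
  have hfpos : ∀ x > 0, 0 < hf x := by
    intro x hx
    have h1 : (β - 1) * τ x < (β - 1) * (β - 1)⁻¹ :=
      mul_lt_mul_of_pos_left (hτlt x hx) hb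
    rw [mul_inv_cancel₀ (ne_of_gt hb)] at h1
    simp only [hfdef]; linarith
  -- the key identity
  have key : ∀ x > 0, G (hf x) = x / (β - 1) := by
    intro x hx
    have hcongr : (∫ y in Ici (1:ℝ), ((β - 1)⁻¹ * y ^ β - τ x)⁻¹) =
        ∫ y in Ici (1:ℝ), (β - 1) * (y ^ β - 1 + hf x)⁻¹ := by
      apply integral_congr_ae
      apply ae_of_all
      intro y
      show ((β - 1)⁻¹ * y ^ β - τ x)⁻¹ = (β - 1) * (y ^ β - 1 + hf x)⁻¹
      have h1 : (β - 1)⁻¹ * y ^ β - τ x = (β - 1)⁻¹ * (y ^ β - 1 + hf x) := by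
        simp only [hfdef]
        field_simp
        ring
      rw [h1, mul_inv, inv_inv]
    have h2 := hτ x hx
    rw [hcongr, integral_const_mul] at h2
    rw [hGdef]
    show (∫ y in Ici (1:ℝ), (y ^ β - 1 + hf x)⁻¹) = x / (β - 1)
    rw [eq_div_iff (ne_of_gt hb)]
    linarith [h2]
  -- hf x ≤ 1 for large x
  set x₁ : ℝ := max 1 ((β - 1) * G 1 + 1) with hx₁def
  have hx₁1 : (1:ℝ) ≤ x₁ := le_max_left _ _
  have hx₁G : (β - 1) * G 1 + 1 ≤ x₁ := le_max_right _ _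
  clear_value x₁
  have hsmall : ∀ x ≥ x₁, hf x ≤ 1 := by
    intro x hx
    have hx0 : (0:ℝ) < x := lt_of_lt_of_le one_pos (le_trans hx₁1 hx)
    by_contra hcon
    push_neg at hcon
    have hmono : G (hf x) ≤ G 1 := by
      rw [hGdef]
      exact aux_mono β hβ (le_of_lt hcon)
    have hkey := key x hx0
    have hG1 : G 1 < x / (β - 1) := by
      rw [lt_div_iff₀ hb]
      have : (β - 1) * G 1 + 1 ≤ x := le_trans hx₁G hx
      linarith
    rw [hkey] at hmono
    exact absurd hmono (not_le.mpr hG1)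
  -- constants of the upper bound
  set C0 : ℝ := ∫ y in Ioi (2:ℝ), (1 - (2:ℝ) ^ (-β))⁻¹ * y ^ (-β) with hC0def
  set C1 : ℝ := Real.log (β + 1) / β + C0 with hC1def
  clear_value C0 C1
  have hupper : ∀ x ≥ x₁, β * (x / (β - 1) - C1) ≤ -Real.log (hf x) := by
    intro x hx
    have hx0 : (0:ℝ) < x := lt_of_lt_of_le one_pos (le_trans hx₁1 hx)
    have hhp := hfpos x hx0
    have hh1 := hsmall x hx
    have := aux_upper β hβ hhp hh1
    have hGx : (∫ y in Ici (1:ℝ), (y ^ β - 1 + hf x)⁻¹) = x / (β - 1) := by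
      rw [← key x hx0, hGdef]
    rw [hGx, ← hC0def, ← hC1def] at this
    have hβ0 : (0:ℝ) < β := by linarith
    have h2 : x / (β - 1) - C1 ≤ -Real.log (hf x) / β := by
      simp only [hC1def] at this ⊢
      linarith
    calc β * (x / (β - 1) - C1) ≤ β * (-Real.log (hf x) / β) :=
          mul_le_mul_of_nonneg_left h2 hβ0.le
      _ = -Real.log (hf x) := by field_simp
  -- hf tends to 0
  have htend0 : Tendsto hf atTop (𝓝 0) := by
    have hexp : Tendsto (fun x : ℝ => Real.exp (β * C1 - β * x / (β - 1))) atTop (𝓝 0) := by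
      apply Real.tendsto_exp_atBot.comp
      have h1 : Tendsto (fun x : ℝ => β * x / (β - 1)) atTop atTop := by
        apply Tendsto.atTop_div_const hb
        exact Tendsto.const_mul_atTop (by linarith : (0:ℝ) < β) tendsto_id
      have h2 := tendsto_atBot_add_const_left atTop (β * C1) (tendsto_neg_atTop_atBot.comp h1)
      simpa [Function.comp, sub_eq_add_neg] using h2
    apply tendsto_of_tendsto_of_tendsto_of_le_of_le' tendsto_const_nhds hexp
    · filter_upwards [eventually_ge_atTop (1:ℝ)] with x hx
      exact (hfpos x (by linarith)).le
    · filter_upwards [eventually_ge_atTop x₁] with x hx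
      have hx0 : (0:ℝ) < x := lt_of_lt_of_le one_pos (le_trans hx₁1 hx)
      have h1 := hupper x hx
      have h2 : Real.log (hf x) ≤ β * C1 - β * x / (β - 1) := by
        have : β * (x / (β - 1) - C1) = β * x / (β - 1) - β * C1 := by ring
        linarith [h1, this.symm ▸ h1]
      calc hf x = Real.exp (Real.log (hf x)) := (Real.exp_log (hfpos x hx0)).symm
        _ ≤ _ := Real.exp_le_exp.mpr h2
  -- the log-ratio tends to β/(β-1)
  have hLtend : Tendsto (fun x => -Real.log (hf x) / x) atTop (𝓝 (β / (β - 1))) := by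
    rw [Metric.tendsto_atTop]
    intro ε hε
    -- choose δ
    have hcont : ContinuousAt (fun d : ℝ => (1 + d) ^ (β - 1)) 0 := by
      apply ContinuousAt.rpow_const (by fun_prop)
      left; norm_num
    have h1t : Tendsto (fun d : ℝ => (1 + d) ^ (β - 1)) (𝓝 0) (𝓝 1) := by
      have := hcont.tendsto
      simpa using this
    set ε' : ℝ := (β - 1) * ε / (4 * β) with hε'def
    have hε' : 0 < ε' := by rw [hε'def]; positivity
    clear_value ε'
    rw [Metric.tendsto_nhds_nhds] at h1t
    obtain ⟨r, hr, hball⟩ := h1t ε' hε'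
    set δ : ℝ := min (r / 2) 1 with hδdef
    have hδ0 : 0 < δ := lt_min (by linarith) one_pos
    have hδ1 : δ ≤ 1 := min_le_right _ _
    have hδr : dist δ (0:ℝ) < r := by
      rw [Real.dist_eq, sub_zero, abs_of_pos hδ0]
      calc δ ≤ r / 2 := min_le_left _ _
        _ < r := by linarith
    have hKest : (1 + δ) ^ (β - 1) < 1 + ε' := by
      have h6 := hball hδr
      rw [Real.dist_eq] at h6
      have h7 := abs_lt.mp h6
      linarith [h7.2]
    clear_value δ
    set K : ℝ := β * (1 + δ) ^ (β - 1) with hKdef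
    have hKpos : 0 < K := by
      have : (0:ℝ) < (1 + δ) ^ (β - 1) := Real.rpow_pos_of_pos (by linarith) _
      positivity
    have hKlt : K < β + β * ε' := by
      rw [hKdef]
      nlinarith
    clear_value K
    have hKb : K / (β - 1) < β / (β - 1) + ε / 4 := by
      have h1 : K < β + β * ε' := hKlt
      have h2 : β * ε' / (β - 1) = ε / 4 := by
        simp only [hε'def]
        field_simp
      calc K / (β - 1) < (β + β * ε') / (β - 1) := by
            rw [div_lt_div_iff₀ hb hb]; nlinarith
        _ = β / (β - 1) + β * ε' / (β - 1) := by ring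
        _ = β / (β - 1) + ε / 4 := by rw [h2]
    set A1 : ℝ := β * |C1| with hA1def
    set A2 : ℝ := |Real.log (K * δ)| with hA2def
    have hA1 : 0 ≤ A1 := by rw [hA1def]; positivity
    have hA2 : 0 ≤ A2 := by rw [hA2def]; exact abs_nonneg _
    set N : ℝ := max x₁ (max ((A1 + 1) * (2 / ε)) ((A2 + 1) * (2 / ε))) with hNdef
    clear_value A1 A2 N
    refine ⟨N + 1, fun x hx => ?_⟩
    have hxx₁ : x ≥ x₁ := by
      have := le_max_left x₁ (max ((A1 + 1) * (2 / ε)) ((A2 + 1) * (2 / ε)))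
      simp only [hNdef] at hx
      linarith [hx, this]
    have hx0 : (0:ℝ) < x := lt_of_lt_of_le one_pos (le_trans hx₁1 hxx₁)
    have hhp := hfpos x hx0
    -- bound A1 / x < ε/2
    have hbnd : ∀ A : ℝ, 0 ≤ A → (A + 1) * (2 / ε) ≤ N → A / x < ε / 2 := by
      intro A hA hAN
      have hxA : (A + 1) * (2 / ε) < x := by
        linarith [hAN, hx]
      have h2A : 2 * A < ε * x := by
        have e1 : ε * ((A + 1) * (2 / ε)) = 2 * (A + 1) := by field_simp
        have e2 : ε * ((A + 1) * (2 / ε)) ≤ ε * x := by nlinarith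
        nlinarith
      rw [div_lt_iff₀ hx0]
      linarith
    have hbnd1 : A1 / x < ε / 2 := by
      apply hbnd A1 hA1
      simp only [hNdef]
      exact le_trans (le_max_left _ _) (le_max_right _ _)
    have hbnd2 : A2 / x < ε / 2 := by
      apply hbnd A2 hA2
      simp only [hNdef]
      exact le_trans (le_max_right _ _) (le_max_right _ _)
    -- lower bound on L x
    have hlow : β / (β - 1) - A1 / x ≤ -Real.log (hf x) / x := by
      have h1 := hupper x hxx₁
      have h2 : β * (x / (β - 1) - C1) / x ≤ -Real.log (hf x) / x :=
        (div_le_div_iff_of_pos_right hx0).mpr h1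
      have h3 : β * (x / (β - 1) - C1) / x = β / (β - 1) - β * C1 / x := by
        field_simp
      rw [h3] at h2
      have h4 : β * C1 ≤ A1 := by
        simp only [hA1def]
        have h5 := le_abs_self C1
        nlinarith [h5]
      have h5 : β * C1 / x ≤ A1 / x := (div_le_div_iff_of_pos_right hx0).mpr h4
      linarith
    -- upper bound on L x
    have hup : -Real.log (hf x) / x ≤ K / (β - 1) + A2 / x := by
      have h1 := aux_lower β hβ hδ0 hhp
      have hGx : (∫ y in Ici (1:ℝ), (y ^ β - 1 + hf x)⁻¹) = x / (β - 1) := by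
        rw [← key x hx0, hGdef]
      rw [hGx, ← hKdef] at h1
      have h2 : Real.log (K * δ) - Real.log (hf x) ≤ K * (x / (β - 1)) := by
        rw [div_le_iff₀ hKpos] at h1
        linarith [h1]
      have h3 : -Real.log (hf x) ≤ K * x / (β - 1) + A2 := by
        have h6 := neg_abs_le (Real.log (K * δ))
        simp only [hA2def]
        have h7 : K * (x / (β - 1)) = K * x / (β - 1) := by ring
        linarith [h2, h6]
      have h4 : -Real.log (hf x) / x ≤ (K * x / (β - 1) + A2) / x :=
        (div_le_div_iff_of_pos_right hx0).mpr h3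
      have h5 : (K * x / (β - 1) + A2) / x = K / (β - 1) + A2 / x := by
        field_simp
      rw [h5] at h4
      exact h4
    rw [Real.dist_eq, abs_lt]
    constructor
    · linarith
    · linarith
  -- part 1
  have part1 : Tendsto (fun x => I x / x) atTop (𝓝 ((β - 1)⁻¹)) := by
    have heq : (fun x => (hf x - 1) + (-Real.log (hf x) / x)) =ᶠ[atTop]
        (fun x => I x / x) := by
      filter_upwards [eventually_gt_atTop (0:ℝ)] with x hx0
      rw [hI x]
      simp only [hfdef]
      field_simp
      ring
    have hT := (htend0.sub_const 1).add hLtend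
    have hval : (0:ℝ) - 1 + β / (β - 1) = (β - 1)⁻¹ := by
      field_simp
      ring
    rw [hval] at hT
    exact Filter.Tendsto.congr' heq hT
  refine ⟨part1, ?_⟩
  have hpow : Tendsto (fun x : ℝ => x ^ (β - 1)) atTop atTop :=
    tendsto_rpow_atTop (by linarith)
  have hcomp := part1.comp hpow
  apply Filter.Tendsto.congr' ?_ hcomp
  filter_upwards [eventually_gt_atTop (0:ℝ)] with x hx0
  have hxb : x ^ β = x * x ^ (β - 1) := by
    have h1 := Real.rpow_add hx0 1 (β - 1)
    have h2 : (1:ℝ) + (β - 1) = β := by ring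
    rw [h2] at h1
    rw [h1, Real.rpow_one]
  simp only [Function.comp]
  rw [hxb, mul_div_mul_left _ _ (ne_of_gt hx0)]
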